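/- Let p be a prime and work in G = ℤ_p^2. Let K ⊆ H be finite-index additive subgroups of G with the same level. Then for any finite-index additive subgroup H′ of G satisfying K ⊆ H′, Lev(H′) = Lev(H), and [G : H′] = [G : H], one has H′ = H. (In the language of the frame: if T ≤ T′ are finite transitive ℤ_p^2-sets with Lev(T) = Lev(T′), then T is the unique U ≤ T′ with Lev(U) = Lev(T) and #U = #T.) -/

import Mathlib

/-- The subgroup p^n·ℤ_p^2 of ℤ_p^2, i.e. the range of multiplication by p^n. -/
noncomputable def pPowSubgroup (p : ℕ) [Fact p.Prime] (d n : ℕ) :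
    AddSubgroup (Fin d → ℤ_[p]) :=
  (DistribMulAction.toAddMonoidHom (Fin d → ℤ_[p]) ((p : ℤ_[p]) ^ n)).range

/-- The level of an additive subgroup H of ℤ_p^d: the largest n with H ⊆ p^n·ℤ_p^d. -/
noncomputable def level (p : ℕ) [Fact p.Prime] (d : ℕ)
    (H : AddSubgroup (Fin d → ℤ_[p])) : ℕ :=
  sSup {n : ℕ | H ≤ pPowSubgroup p d n}

variable {p : ℕ} [Fact p.Prime]

lemma mem_pPow_iff {d n : ℕ} (x : Fin d → ℤ_[p]) :
    x ∈ pPowSubgroup p d n ↔ ∀ i, (p : ℤ_[p]) ^ n ∣ x i := by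
  constructor
  · rintro ⟨y, rfl⟩ i
    exact ⟨y i, rfl⟩
  · intro h
    choose y hy using h
    exact ⟨y, funext fun i => (hy i).symm⟩

lemma smul_mem_of_index_ne_zero {d : ℕ} (H : AddSubgroup (Fin d → ℤ_[p])) (hH : H.index ≠ 0)
    (a : ℤ_[p]) {x : Fin d → ℤ_[p]} (hx : x ∈ H) : a • x ∈ H := by
  set n := H.index with hn
  set k := n.factorization p with hk
  have hp : p.Prime := Fact.out
  have hnm : p ^ k * (n / p ^ k) = n := Nat.ordProj_mul_ordCompl_eq_self n p
  have hm : ¬ (p : ℤ) ∣ (n / p ^ k : ℕ) := by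
    rw [Int.natCast_dvd_natCast]
    exact Nat.not_dvd_ordCompl hp hH
  have hmu : IsUnit ((n / p ^ k : ℕ) : ℤ_[p]) := by
    rw [PadicInt.isUnit_iff]
    have h1 : ‖((n / p ^ k : ℕ) : ℤ_[p])‖ ≤ 1 := PadicInt.norm_le_one _
    have h2 : ¬ ‖(((n / p ^ k : ℕ) : ℤ) : ℤ_[p])‖ < 1 := by
      rw [PadicInt.norm_int_lt_one_iff_dvd]; exact hm
    rw [Int.cast_natCast] at h2
    exact le_antisymm h1 (not_lt.mp h2)
  obtain ⟨u, hu⟩ := hmu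
  obtain ⟨c, hc⟩ : ∃ c, a - a.appr k = (p : ℤ_[p]) ^ k * c := by
    have := PadicInt.appr_spec k a
    rw [Ideal.mem_span_singleton, dvd_iff_exists_eq_mul_left] at this
    obtain ⟨c, hc⟩ := this
    exact ⟨c, by rw [hc]; ring⟩
  -- a • x = (appr a k) • x + (p^k * c) • x
  have hn' : (n : ℤ_[p]) = (p : ℤ_[p]) ^ k * u := by
    rw [hu]; exact_mod_cast hnm.symm
  have key : a • x = (a.appr k : ℤ_[p]) • x + n • (((u⁻¹ : ℤ_[p]ˣ) * c : ℤ_[p]) • x) := by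
    rw [← Nat.cast_smul_eq_nsmul ℤ_[p] n, smul_smul]
    have ha : (a.appr k : ℤ_[p]) + (n : ℤ_[p]) * ((u⁻¹ : ℤ_[p]ˣ) * c) = a := by
      have huu : (p : ℤ_[p]) ^ k * ↑u * (↑u⁻¹ * c) = (p : ℤ_[p]) ^ k * c := by
        rw [mul_assoc ((p : ℤ_[p]) ^ k), ← mul_assoc (u : ℤ_[p]), Units.mul_inv, one_mul]
      rw [hn', huu, ← hc]; ring
    calc a • x = ((a.appr k : ℤ_[p]) + (n : ℤ_[p]) * ((u⁻¹ : ℤ_[p]ˣ) * c)) • x := by rw [ha]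
    _ = _ := by rw [add_smul]
  rw [key]
  refine AddSubgroup.add_mem _ ?_ (AddSubgroup.nsmul_index_mem H _)
  rw [Nat.cast_smul_eq_nsmul]
  exact AddSubgroup.nsmul_mem _ hx _

lemma pPow_zero_eq_top {d : ℕ} : pPowSubgroup p d 0 = ⊤ := by
  ext x
  simp only [AddSubgroup.mem_top, iff_true, mem_pPow_iff]
  intro i; simp

instance : Infinite (Fin 2 → ℤ_[p]) :=
  Infinite.of_injective (fun a _ => a) (fun a b h => congrFun h 0)

lemma exists_ne_zero_mem (H : AddSubgroup (Fin 2 → ℤ_[p])) (hH : H.index ≠ 0) :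
    ∃ x ∈ H, x ≠ 0 := by
  by_contra h
  push_neg at h
  have hb : H = ⊥ := by
    rw [AddSubgroup.eq_bot_iff_forall]
    exact h
  rw [hb, AddSubgroup.index_bot, Nat.card_eq_zero_of_infinite] at hH
  exact hH rfl

lemma bddAbove_levelSet (H : AddSubgroup (Fin 2 → ℤ_[p])) (hH : H.index ≠ 0) :
    BddAbove {n : ℕ | H ≤ pPowSubgroup p 2 n} := by
  obtain ⟨x, hxH, hx0⟩ := exists_ne_zero_mem H hH
  obtain ⟨i, hi⟩ : ∃ i, x i ≠ 0 := by
    by_contra h; push_neg at h; exact hx0 (funext h)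
  refine ⟨(x i).valuation, fun n hn => ?_⟩
  have hdvd : (p : ℤ_[p]) ^ n ∣ x i := (mem_pPow_iff x).mp (hn hxH) i
  have hv : (n : ℤ) ≤ (x i).valuation := by
    rw [Nat.cast_le, ← PadicInt.mem_span_pow_iff_le_valuation _ hi, Ideal.mem_span_singleton]
    exact hdvd
  omega

lemma level_le (H : AddSubgroup (Fin 2 → ℤ_[p])) (hH : H.index ≠ 0) :
    H ≤ pPowSubgroup p 2 (level p 2 H) := by
  have h0 : 0 ∈ {n : ℕ | H ≤ pPowSubgroup p 2 n} := by
    simp [Set.mem_setOf_eq, pPow_zero_eq_top]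
  exact Nat.sSup_mem ⟨0, h0⟩ (bddAbove_levelSet H hH)

lemma level_not_le (H : AddSubgroup (Fin 2 → ℤ_[p])) (hH : H.index ≠ 0) :
    ¬ H ≤ pPowSubgroup p 2 (level p 2 H + 1) := by
  intro h
  have hm : level p 2 H + 1 ∈ {n : ℕ | H ≤ pPowSubgroup p 2 n} := h
  have := le_csSup (bddAbove_levelSet H hH) hm
  simp only [level] at this
  omega

section Comparable

variable (v : Fin 2 → ℤ_[p]) (j : Fin 2)

/-- The linear functional killing exactly the line through v (when v j is a unit). -/
private noncomputable def psi (x : Fin 2 → ℤ_[p]) : ℤ_[p] :=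
  v j * x (if j = 0 then 1 else 0) - v (if j = 0 then 1 else 0) * x j

lemma psi_sub (x y : Fin 2 → ℤ_[p]) : psi v j (x - y) = psi v j x - psi v j y := by
  simp only [psi, Pi.sub_apply]; ring

lemma psi_smul (c : ℤ_[p]) (x : Fin 2 → ℤ_[p]) : psi v j (c • x) = c * psi v j x := by
  simp only [psi, Pi.smul_apply, smul_eq_mul]; ring

lemma eq_smul_of_psi_eq_zero (hvj : IsUnit (v j)) (x : Fin 2 → ℤ_[p])
    (hx : psi v j x = 0) : x = (((hvj.unit⁻¹ : ℤ_[p]ˣ) : ℤ_[p]) * x j) • v := by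
  set w : ℤ_[p] := ((hvj.unit⁻¹ : ℤ_[p]ˣ) : ℤ_[p]) with hw
  have hsub : v j * x (if j = 0 then 1 else 0) = v (if j = 0 then 1 else 0) * x j :=
    sub_eq_zero.mp hx
  have hcov : ∀ i : Fin 2, i = j ∨ i = (if j = 0 then 1 else 0) := by
    intro i; fin_cases i <;> fin_cases j <;> simp
  have hu : w * v j = 1 := by
    rw [hw, mul_comm]
    nth_rewrite 1 [← IsUnit.unit_spec hvj]
    exact Units.mul_inv _
  funext i
  rcases hcov i with rfl | rfl
  · simp only [Pi.smul_apply, smul_eq_mul]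
    calc x i = (w * v i) * x i := by rw [hu, one_mul]
    _ = w * x i * v i := by ring
  · simp only [Pi.smul_apply, smul_eq_mul]
    calc x (if j = 0 then 1 else 0)
        = (w * v j) * x (if j = 0 then 1 else 0) := by rw [hu, one_mul]
    _ = w * (v j * x (if j = 0 then 1 else 0)) := by ring
    _ = w * (v (if j = 0 then 1 else 0) * x j) := by rw [hsub]
    _ = w * x j * v (if j = 0 then 1 else 0) := by ring

lemma mem_of_psi_eq (hvj : IsUnit (v j)) (L : AddSubgroup (Fin 2 → ℤ_[p]))
    (hs : ∀ (a : ℤ_[p]) x, x ∈ L → a • x ∈ L) (hv : v ∈ L)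
    (x z : Fin 2 → ℤ_[p]) (hz : z ∈ L) (h : psi v j x = psi v j z) : x ∈ L := by
  have h0 : psi v j (x - z) = 0 := by rw [psi_sub, h, sub_self]
  have := eq_smul_of_psi_eq_zero v j hvj (x - z) h0
  have hxz : x - z ∈ L := this ▸ hs _ v hv
  have := L.add_mem hxz hz
  simpa using this

lemma comparable_of_primitive (hvj : IsUnit (v j)) (L₁ L₂ : AddSubgroup (Fin 2 → ℤ_[p]))
    (hs₁ : ∀ (a : ℤ_[p]) x, x ∈ L₁ → a • x ∈ L₁) (hs₂ : ∀ (a : ℤ_[p]) x, x ∈ L₂ → a • x ∈ L₂)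
    (hv₁ : v ∈ L₁) (hv₂ : v ∈ L₂) : L₁ ≤ L₂ ∨ L₂ ≤ L₁ := by
  by_cases h12 : L₁ ≤ L₂
  · exact Or.inl h12
  obtain ⟨x, hx₁, hx₂⟩ : ∃ x ∈ L₁, x ∉ L₂ := by
    simpa [SetLike.le_def, not_forall] using h12
  right
  intro y hy
  rcases ValuationRing.dvd_total (psi v j x) (psi v j y) with ⟨c, hc⟩ | ⟨c, hc⟩
  · -- psi y = psi x * c = psi (c • x), so y ∈ L₁
    refine mem_of_psi_eq v j hvj L₁ hs₁ hv₁ y (c • x) (hs₁ c x hx₁) ?_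
    rw [psi_smul, hc]; ring
  · -- psi x = psi y * c = psi (c • y), so x ∈ L₂ : contradiction
    exact absurd (mem_of_psi_eq v j hvj L₂ hs₂ hv₂ x (c • y) (hs₂ c y hy)
      (by rw [psi_smul, hc]; ring)) hx₂

end Comparable

/-- In G = ℤ_p², let K ⊆ H be finite-index additive subgroups with the same level. Then
H is the unique finite-index subgroup H′ ⊇ K with the level of H and the index of H. -/
theorem unique_subgroup_same_level_same_index
    (p : ℕ) [Fact p.Prime]
    (H K : AddSubgroup (Fin 2 → ℤ_[p])) (hH : H.index ≠ 0) (hK : K.index ≠ 0)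
    (hKH : K ≤ H) (hlev : level p 2 K = level p 2 H) :
    ∀ H' : AddSubgroup (Fin 2 → ℤ_[p]), H'.index ≠ 0 → K ≤ H' →
      level p 2 H' = level p 2 H → H'.index = H.index → H' = H := by
  intro H' hH' hKH' hlev' hidx
  set a := level p 2 H with ha
  set φ : (Fin 2 → ℤ_[p]) →+ (Fin 2 → ℤ_[p]) :=
    DistribMulAction.toAddMonoidHom (Fin 2 → ℤ_[p]) ((p : ℤ_[p]) ^ a) with hφ
  have hrange : φ.range = pPowSubgroup p 2 a := rfl
  -- inclusions into p^a G
  have hHle : H ≤ pPowSubgroup p 2 a := level_le H hH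
  have hH'le : H' ≤ pPowSubgroup p 2 a := hlev' ▸ level_le H' hH'
  have hKle : K ≤ pPowSubgroup p 2 a := hlev ▸ level_le K hK
  have hKnle : ¬ K ≤ pPowSubgroup p 2 (a + 1) := hlev ▸ level_not_le K hK
  -- the comapped subgroups
  set H₀ := H.comap φ with hH₀
  set H'₀ := H'.comap φ with hH'₀
  -- indices
  have hiH : H₀.index = H.relIndex (pPowSubgroup p 2 a) := by
    rw [hH₀, AddSubgroup.index_comap, hrange]
  have hiH' : H'₀.index = H'.relIndex (pPowSubgroup p 2 a) := by
    rw [hH'₀, AddSubgroup.index_comap, hrange]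
  have hrm : H.relIndex (pPowSubgroup p 2 a) * (pPowSubgroup p 2 a).index = H.index :=
    AddSubgroup.relIndex_mul_index hHle
  have hrm' : H'.relIndex (pPowSubgroup p 2 a) * (pPowSubgroup p 2 a).index = H'.index :=
    AddSubgroup.relIndex_mul_index hH'le
  have hpa : (pPowSubgroup p 2 a).index ≠ 0 := by
    intro h0; rw [h0, mul_zero] at hrm; exact hH hrm.symm
  have hidx₀ : H'₀.index = H₀.index := by
    rw [hiH, hiH']
    exact Nat.eq_of_mul_eq_mul_right (Nat.pos_of_ne_zero hpa) (by rw [hrm, hrm', hidx])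
  have hiH0 : H₀.index ≠ 0 := by
    rw [hiH]; intro h0; rw [h0, zero_mul] at hrm; exact hH hrm.symm
  -- primitive vector v ∈ K₀
  obtain ⟨x, hxK, hxn⟩ : ∃ x ∈ K, x ∉ pPowSubgroup p 2 (a + 1) := by
    by_contra h; push_neg at h; exact hKnle h
  obtain ⟨v, hv⟩ : ∃ v, φ v = x := hKle hxK
  have hvK : v ∈ K.comap φ := by simp [AddSubgroup.mem_comap, hv, hxK]
  obtain ⟨j, hj⟩ : ∃ j, ¬ (p : ℤ_[p]) ∣ v j := by
    by_contra h
    push_neg at h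
    refine hxn ?_
    rw [mem_pPow_iff]
    intro i
    obtain ⟨w, hw⟩ := h i
    refine ⟨w, ?_⟩
    have : x i = (p : ℤ_[p]) ^ a * v i := by rw [← hv]; rfl
    rw [this, hw, pow_succ]; ring
  have hvj : IsUnit (v j) := by
    rw [PadicInt.isUnit_iff]
    refine le_antisymm (PadicInt.norm_le_one _) (not_lt.mp ?_)
    rw [PadicInt.norm_lt_one_iff_dvd]; exact hj
  -- smul-closedness of the comaps
  have hs : ∀ (L : AddSubgroup (Fin 2 → ℤ_[p])), L.index ≠ 0 →
      ∀ (c : ℤ_[p]) y, y ∈ L.comap φ → c • y ∈ L.comap φ := by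
    intro L hL c y hy
    simp only [AddSubgroup.mem_comap] at hy ⊢
    have : φ (c • y) = c • φ y := by
      show (p : ℤ_[p]) ^ a • (c • y) = c • ((p : ℤ_[p]) ^ a • y)
      rw [smul_comm]
    rw [this]
    exact smul_mem_of_index_ne_zero L hL c hy
  -- comparability
  have hcomp := comparable_of_primitive v j hvj H'₀ H₀
    (hs H' hH') (hs H hH) (AddSubgroup.comap_mono hKH' hvK) (AddSubgroup.comap_mono hKH hvK)
  have heq₀ : H'₀ = H₀ := by
    rcases hcomp with hle | hle
    · refine le_antisymm hle ?_
      rw [← AddSubgroup.relIndex_eq_one]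
      have := AddSubgroup.relIndex_mul_index hle
      rw [hidx₀] at this
      exact Nat.eq_of_mul_eq_mul_right (Nat.pos_of_ne_zero hiH0) (by rw [this, one_mul])
    · refine le_antisymm ?_ hle
      rw [← AddSubgroup.relIndex_eq_one]
      have := AddSubgroup.relIndex_mul_index hle
      rw [← hidx₀] at this
      exact Nat.eq_of_mul_eq_mul_right (Nat.pos_of_ne_zero (hidx₀ ▸ hiH0))
        (by rw [this, one_mul])
  -- conclude
  calc H' = AddSubgroup.map φ H'₀ := (AddSubgroup.map_comap_eq_self (hrange ▸ hH'le)).symm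
  _ = AddSubgroup.map φ H₀ := by rw [heq₀]
  _ = H := AddSubgroup.map_comap_eq_self (hrange ▸ hHle)
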